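/- Let P = (P_1, ..., P_N) be a PVM on ℂ^d and M'' = (M''_1, ..., M''_K) a POVM on ℂ^d jointly measurable with P (there exists a joint POVM N with margins P and M''). Then each N_{ij} and each M''_j commutes with every P_k, and the joint POVM is unique, given by N_{ij} = P_i M''_j = P_i M''_j P_i. -/

import Mathlib

open Matrix
open scoped ComplexOrder

lemma sum_psd_eq_zero' {n K : ℕ} (X : Fin K → Matrix (Fin n) (Fin n) ℂ)
    (h : ∀ j, (X j).PosSemidef) (hs : ∑ j, X j = 0) : ∀ j, X j = 0 := by
  intro j0
  have hmv : ∀ x : Fin n → ℂ, (X j0) *ᵥ x = 0 := by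
    intro x
    have hsum : ∑ j, star x ⬝ᵥ (X j) *ᵥ x = 0 := by
      have h1 : (∑ j, X j) *ᵥ x = ∑ j, X j *ᵥ x := by
        ext a
        simp only [Matrix.mulVec, dotProduct, Matrix.sum_apply, Finset.sum_apply, Finset.sum_mul]
        rw [Finset.sum_comm]
      have h2 : star x ⬝ᵥ (∑ j, (X j) *ᵥ x) = ∑ j, star x ⬝ᵥ (X j) *ᵥ x := by
        simp only [dotProduct, Finset.sum_apply, Finset.mul_sum]
        rw [Finset.sum_comm]
      rw [← h2, ← h1, hs]
      simp
    have hz := (Fintype.sum_eq_zero_iff_of_nonneg (fun j => (h j).dotProduct_mulVec_nonneg x)).mp hsum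
    exact ((h j0).dotProduct_mulVec_zero_iff x).mp (congrFun hz j0)
  ext a b
  have := congrFun (hmv (Pi.single b 1)) a
  simpa [Matrix.mulVec_single] using this

/-- Any observable jointly measurable with a PVM commutes with it, and the joint
observable is unique, given by products. -/
theorem pvm_joint_commutes_and_unique
    (d N K : ℕ)
    (P : Fin N → Matrix (Fin d) (Fin d) ℂ)
    (hPh : ∀ i, (P i).IsHermitian)
    (hPorth : ∀ i j, P i * P j = if i = j then P i else 0)
    (hPsum : ∑ i, P i = 1)
    (M'' : Fin K → Matrix (Fin d) (Fin d) ℂ)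
    (hM''pos : ∀ j, (M'' j).PosSemidef)
    (hM''sum : ∑ j, M'' j = 1)
    (Nj : Fin N → Fin K → Matrix (Fin d) (Fin d) ℂ)
    (hNjpos : ∀ i j, (Nj i j).PosSemidef)
    (hmarg1 : ∀ i, ∑ j, Nj i j = P i)
    (hmarg2 : ∀ j, ∑ i, Nj i j = M'' j) :
    (∀ i j k, Nj i j * P k = P k * Nj i j) ∧
    (∀ j k, M'' j * P k = P k * M'' j) ∧
    (∀ i j, Nj i j = P i * M'' j ∧ Nj i j = P i * M'' j * P i) := by
  -- Q i = 1 - P i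
  set Q : Fin N → Matrix (Fin d) (Fin d) ℂ := fun i => 1 - P i with hQ
  have hQh : ∀ i, (Q i)ᴴ = Q i := by
    intro i
    simp [hQ, conjTranspose_sub, (hPh i).eq]
  have hPP : ∀ i, P i * P i = P i := by intro i; simpa using hPorth i i
  have hQPQ : ∀ i, Q i * P i * Q i = 0 := by
    intro i
    simp [hQ, sub_mul, mul_sub, hPP i]
  -- each Q i * Nj i j * Q i is PSD and they sum to 0
  have hterm0 : ∀ i j, Q i * Nj i j * Q i = 0 := by
    intro i j
    apply sum_psd_eq_zero' (fun j => Q i * Nj i j * Q i)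
    · intro j
      have := (hNjpos i j).mul_mul_conjTranspose_same (Q i)
      simpa [hQh i] using this
    · have : ∑ j, Q i * Nj i j * Q i = Q i * (∑ j, Nj i j) * Q i := by
        simp [Finset.mul_sum, Finset.sum_mul]
      rw [this, hmarg1 i, hQPQ i]
  -- deduce Nj i j * Q i = 0 and Q i * Nj i j = 0
  have hNQ : ∀ i j, Nj i j * Q i = 0 := by
    intro i j
    open scoped MatrixOrder Matrix.Norms.L2Operator in
    obtain ⟨B, hB⟩ := CStarAlgebra.nonneg_iff_eq_star_mul_self.mp (hNjpos i j).nonneg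
    rw [star_eq_conjTranspose] at hB
    have h0 : (B * Q i)ᴴ * (B * Q i) = 0 := by
      have := hterm0 i j
      rw [hB] at this
      calc (B * Q i)ᴴ * (B * Q i) = Q i * (Bᴴ * B) * Q i := by
            rw [conjTranspose_mul, hQh i]
            simp only [Matrix.mul_assoc]
        _ = 0 := this
    have hBQ : B * Q i = 0 := conjTranspose_mul_self_eq_zero.mp h0
    rw [hB, mul_assoc, hBQ, mul_zero]
  have hQN : ∀ i j, Q i * Nj i j = 0 := by
    intro i j
    have := congrArg conjTranspose (hNQ i j)
    simpa [conjTranspose_mul, hQh i, (hNjpos i j).isHermitian.eq] using this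
  have hNP : ∀ i j, Nj i j * P i = Nj i j := by
    intro i j
    have := hNQ i j
    simp only [hQ, mul_sub, mul_one, sub_eq_zero] at this
    exact this.symm
  have hPN : ∀ i j, P i * Nj i j = Nj i j := by
    intro i j
    have := hQN i j
    simp only [hQ, sub_mul, one_mul, sub_eq_zero] at this
    exact this.symm
  have hcomm : ∀ i j k, Nj i j * P k = P k * Nj i j := by
    intro i j k
    by_cases hk : k = i
    · subst hk; rw [hNP, hPN]
    · have h1 : Nj i j * P k = 0 := by
        rw [← hNP i j, mul_assoc, hPorth i k, if_neg (fun h => hk h.symm), mul_zero]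
      have h2 : P k * Nj i j = 0 := by
        rw [← hPN i j, ← mul_assoc, hPorth k i, if_neg hk, zero_mul]
      rw [h1, h2]
  refine ⟨hcomm, ?_, ?_⟩
  · intro j k
    rw [← hmarg2 j, Finset.sum_mul, Finset.mul_sum]
    exact Finset.sum_congr rfl fun i _ => hcomm i j k
  · intro i j
    have h1 : P i * M'' j = Nj i j := by
      rw [← hmarg2 j, Finset.mul_sum]
      rw [Finset.sum_eq_single i]
      · exact hPN i j
      · intro k _ hk
        rw [← hPN k j, ← mul_assoc, hPorth i k, if_neg (fun h => hk h.symm), zero_mul]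
      · simp
    refine ⟨h1.symm, ?_⟩
    rw [h1, hNP i j]
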